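/- arXiv:1002.3311 — 3 statements merged into one kernel-verified Lean document; each statement's English description precedes it below -/
import Mathlib

section
/- Let n ≥ 1 and let x ∈ Mₙ(ℂ) be an upper triangular matrix that is regular, i.e. the space {z ∈ Mₙ(ℂ) | zx = xz} has complex dimension n. Then for every strictly upper triangular matrix m ∈ Mₙ(ℂ) there exists an upper triangular matrix u ∈ Mₙ(ℂ) with xu − ux = m; that is, ad x maps the Borel subalgebra of upper triangular matrices onto its derived algebra of strictly upper triangular matrices. (This is the gl_n case of the surjectivity statement proved in Lemma 5.2(i): for x ∈ 𝔟 ∩ 𝔤ʳ, the map ad_𝔟 x : 𝔟 → [𝔟,𝔟] is surjective.) -/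
open Matrix

noncomputable section

/-- `Mat n` is the algebra `Mₙ(ℂ)` of `n × n` complex matrices. -/
abbrev Mat (n : ℕ) := Matrix (Fin n) (Fin n) ℂ

/-- Evaluation of a polynomial in the `2n²` matrix entries at a pair of matrices:
a "polynomial function on `Mₙ(ℂ) × Mₙ(ℂ)`". -/
def evalPair {n : ℕ} (f : MvPolynomial ((Fin n × Fin n) ⊕ (Fin n × Fin n)) ℂ)
    (x y : Mat n) : ℂ :=
  MvPolynomial.eval (Sum.elim (fun p => x p.1 p.2) (fun p => y p.1 p.2)) f

/-- `v` is a cyclic vector for the pair `(x, y)`: the vectors `a · v`, for `a` in the unital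
subalgebra `ℂ⟨x,y⟩` generated by `x` and `y`, exhaust (equivalently, span) `ℂⁿ`. -/
def IsCyclicVec {n : ℕ} (x y : Mat n) (v : Fin n → ℂ) : Prop :=
  ∀ w : Fin n → ℂ, ∃ a ∈ Algebra.adjoin ℂ ({x, y} : Set (Mat n)), a.mulVec v = w

/-- A matrix is upper triangular: all entries below the main diagonal vanish. -/
def UpperTri {n : ℕ} (x : Mat n) : Prop := ∀ i j : Fin n, j < i → x i j = 0

/-- A matrix is strictly upper triangular: all entries on or below the main diagonal vanish. -/
def StrictUpperTri {n : ℕ} (x : Mat n) : Prop := ∀ i j : Fin n, j ≤ i → x i j = 0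

/-- The diagonal part of a matrix: the diagonal matrix with the same diagonal entries. -/
def diagPart {n : ℕ} (x : Mat n) : Mat n := Matrix.diagonal (fun i => x i i)

/-- A matrix is diagonalizable: conjugate to a diagonal matrix. -/
def IsDiagable {n : ℕ} (s : Mat n) : Prop :=
  ∃ g : Mat n, IsUnit g ∧ Matrix.IsDiag (g * s * g⁻¹)

/-- A matrix is regular semisimple: its characteristic polynomial has `n` distinct
complex roots. -/
def RegSS {n : ℕ} (x : Mat n) : Prop := x.charpoly.roots.toFinset.card = n


def suppSubmodule {n : ℕ} (P : Fin n × Fin n → Prop) [DecidablePred P] :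
    Submodule ℂ (Mat n) where
  carrier := {m | ∀ i j, ¬ P (i, j) → m i j = 0}
  add_mem' := by
    intro a b ha hb i j h
    simp [Matrix.add_apply, ha i j h, hb i j h]
  zero_mem' := by intro i j h; simp
  smul_mem' := by
    intro c a ha i j h
    simp [Matrix.smul_apply, ha i j h]

def borelSub (n : ℕ) : Submodule ℂ (Mat n) := suppSubmodule (fun p => p.1 ≤ p.2)
def nilSub (n : ℕ) : Submodule ℂ (Mat n) := suppSubmodule (fun p => p.1 < p.2)

lemma mem_borel {n : ℕ} (m : Mat n) : m ∈ borelSub n ↔ UpperTri m := by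
  constructor
  · intro hm i j hji
    exact hm i j (not_le_of_gt hji)
  · intro hm i j hij
    exact hm i j (lt_of_not_ge hij)

lemma mem_nilrad {n : ℕ} (m : Mat n) : m ∈ nilSub n ↔ StrictUpperTri m := by
  constructor
  · intro hm i j hji
    exact hm i j (not_lt_of_ge hji)
  · intro hm i j hij
    exact hm i j (le_of_not_gt hij)

def suppEquiv {n : ℕ} (P : Fin n × Fin n → Prop) [DecidablePred P] :
    suppSubmodule P ≃ₗ[ℂ] ({p : Fin n × Fin n // P p} → ℂ) where
  toFun m p := m.1 p.1.1 p.1.2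
  map_add' a b := rfl
  map_smul' c a := rfl
  invFun f := ⟨fun i j => if h : P (i, j) then f ⟨(i, j), h⟩ else 0, by
    intro i j h; simp [h]⟩
  left_inv := by
    rintro ⟨m, hm⟩
    ext i j
    by_cases h : P (i, j)
    · simp [h]
    · simp [h, hm i j h]
  right_inv := by
    rintro f
    ext ⟨⟨i, j⟩, hp⟩
    simp [hp]

lemma finrank_suppSubmodule {n : ℕ} (P : Fin n × Fin n → Prop) [DecidablePred P] :
    Module.finrank ℂ (suppSubmodule P) = Fintype.card {p : Fin n × Fin n // P p} := by
  rw [(suppEquiv P).finrank_eq, Module.finrank_fintype_fun_eq_card]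

lemma card_le_eq {n : ℕ} :
    Fintype.card {p : Fin n × Fin n // p.1 ≤ p.2}
      = Fintype.card {p : Fin n × Fin n // p.1 < p.2} + n := by
  classical
  rw [Fintype.card_subtype, Fintype.card_subtype]
  have h1 : (Finset.univ.filter fun p : Fin n × Fin n => p.1 ≤ p.2)
      = (Finset.univ.filter fun p : Fin n × Fin n => p.1 < p.2)
        ∪ (Finset.univ.filter fun p : Fin n × Fin n => p.1 = p.2) := by
    rw [← Finset.filter_or]
    apply Finset.filter_congr
    intro p _
    simp [le_iff_lt_or_eq]
  rw [h1, Finset.card_union_of_disjoint]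
  · congr 1
    have h2 : (Finset.univ.filter fun p : Fin n × Fin n => p.1 = p.2)
        = Finset.univ.image (fun i : Fin n => (i, i)) := by
      ext ⟨i, j⟩
      simp only [Finset.mem_filter, Finset.mem_univ, true_and, Finset.mem_image]
      constructor
      · rintro rfl; exact ⟨i, by simp⟩
      · rintro ⟨k, hk⟩; cases hk; rfl
    rw [h2, Finset.card_image_of_injective _ (fun a b h => by simpa using h), Finset.card_univ,
      Fintype.card_fin]
  · rw [Finset.disjoint_filter]
    intro p _ hlt heq
    exact absurd heq hlt.ne
lemma commSub_strict {n : ℕ} {a b : Mat n} (ha : UpperTri a) (hb : UpperTri b) :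
    StrictUpperTri (a * b - b * a) := by
  intro i j hji
  simp only [Matrix.sub_apply, Matrix.mul_apply]
  rcases lt_or_eq_of_le hji with h | h
  · rw [Finset.sum_eq_zero, Finset.sum_eq_zero, sub_zero]
    · intro k _
      rcases lt_or_ge k i with hk | hk
      · rw [hb i k hk, zero_mul]
      · rw [ha k j (lt_of_lt_of_le h hk), mul_zero]
    · intro k _
      rcases lt_or_ge k i with hk | hk
      · rw [ha i k hk, zero_mul]
      · rw [hb k j (lt_of_lt_of_le h hk), mul_zero]
  · subst h
    rw [Finset.sum_eq_single j, Finset.sum_eq_single j]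
    · ring
    · intro k _ hk
      rcases lt_or_gt_of_ne hk with hlt | hgt
      · rw [hb j k hlt, zero_mul]
      · rw [ha k j hgt, mul_zero]
    · intro h; exact absurd (Finset.mem_univ j) h
    · intro k _ hk
      rcases lt_or_gt_of_ne hk with hlt | hgt
      · rw [ha j k hlt, zero_mul]
      · rw [hb k j hgt, mul_zero]
    · intro h; exact absurd (Finset.mem_univ j) h

def adB {n : ℕ} (x : Mat n) (hx : UpperTri x) : borelSub n →ₗ[ℂ] nilSub n where
  toFun u := ⟨x * u.1 - u.1 * x,
    (mem_nilrad _).2 (commSub_strict hx ((mem_borel u.1).1 u.2))⟩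
  map_add' a b := by
    ext i j
    simp [Matrix.mul_add, Matrix.add_mul]
    ring
  map_smul' c a := by
    ext i j
    simp [Matrix.mul_smul, Matrix.smul_mul]
    ring

set_option synthInstance.maxHeartbeats 1000000 in
set_option maxHeartbeats 1000000 in
/-- **`gl_n` case of the surjectivity statement in Lemma 5.2(i)**: if `x` is an upper
triangular matrix that is regular (its centralizer has dimension `n`), then `ad x` maps
the Borel subalgebra of upper triangular matrices onto the space of strictly upper
triangular matrices. -/
theorem stmt6 (n : ℕ) (hn : 1 ≤ n) (x : Mat n) (hx : UpperTri x)
    (hreg : Module.finrank ℂ (Subalgebra.centralizer ℂ ({x} : Set (Mat n))) = n) :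
    ∀ m : Mat n, StrictUpperTri m → ∃ u : Mat n, UpperTri u ∧ x * u - u * x = m := by
  classical
  set L := adB x hx with hL
  -- kernel of L embeds into the centralizer
  have hker : Module.finrank ℂ (LinearMap.ker L) ≤ n := by
    have hle : (LinearMap.ker L).map (borelSub n).subtype
        ≤ Subalgebra.toSubmodule (Subalgebra.centralizer ℂ ({x} : Set (Mat n))) := by
      rintro z ⟨u, hu, rfl⟩
      rw [Subalgebra.mem_toSubmodule, Subalgebra.mem_centralizer_iff]
      intro g hg
      rw [Set.mem_singleton_iff] at hg
      rw [hg]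
      have h0 : x * u.1 - u.1 * x = 0 := congrArg Subtype.val hu
      exact sub_eq_zero.mp h0
    have heq : Module.finrank ℂ ((LinearMap.ker L).map (borelSub n).subtype)
        = Module.finrank ℂ (LinearMap.ker L) :=
      (Submodule.equivMapOfInjective (borelSub n).subtype (Submodule.injective_subtype _)
        (LinearMap.ker L)).symm.finrank_eq
    calc Module.finrank ℂ (LinearMap.ker L)
        = Module.finrank ℂ ((LinearMap.ker L).map (borelSub n).subtype) := heq.symm
      _ ≤ Module.finrank ℂ
          (Subalgebra.toSubmodule (Subalgebra.centralizer ℂ ({x} : Set (Mat n)))) :=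
          Submodule.finrank_mono hle
      _ = n := hreg
  have hdimB : Module.finrank ℂ (borelSub n) = Module.finrank ℂ (nilSub n) + n := by
    rw [borelSub, nilSub, finrank_suppSubmodule, finrank_suppSubmodule, card_le_eq]
  have hrange : LinearMap.range L = ⊤ := by
    apply Submodule.eq_top_of_finrank_eq
    have h1 := LinearMap.finrank_range_add_finrank_ker L
    have h2 : Module.finrank ℂ (LinearMap.range L) ≤ Module.finrank ℂ (nilSub n) :=
      (LinearMap.range L).finrank_le
    omega
  intro m hm
  have hmN : m ∈ nilSub n := (mem_nilrad m).2 hm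
  obtain ⟨u, hu⟩ := (LinearMap.range_eq_top.mp hrange) ⟨m, hmN⟩
  refine ⟨u.1, (mem_borel u.1).1 u.2, ?_⟩
  exact congrArg Subtype.val hu
end
end

section
/- Let n ≥ 1, let x ∈ Mₙ(ℂ) be upper triangular, and let m, y, h ∈ Mₙ(ℂ) with m strictly upper triangular and h diagonal. Then the following are equivalent: (a) for every α ∈ Mₙ(ℂ) and every upper triangular β ∈ Mₙ(ℂ) one has tr(α m) + tr((αx − xα + β) y) + tr(diag(β) h) = 0, where diag(β) is the diagonal part of β; (b) y is upper triangular, m = yx − xy, and h = −diag(y). (This is the gl_n case of the linear-algebra computation at the heart of Proposition 5.1, identifying the fiber of the conormal bundle to ε(g̃) inside T*(ℬ × 𝔤 × 𝔱).) -/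
open Matrix

noncomputable section

lemma trace_std {n : ℕ} (i j : Fin n) (M : Mat n) :
    Matrix.trace (Matrix.single i j (1:ℂ) * M) = M j i := by
  simp [Matrix.trace, Matrix.diag, Matrix.mul_apply, Matrix.single, Matrix.of_apply,
    ite_and, Finset.sum_ite_eq]

lemma trace_diag_mul {n : ℕ} (f : Fin n → ℂ) (M : Mat n) :
    Matrix.trace (Matrix.diagonal f * M) = ∑ i, f i * M i i := by
  simp [Matrix.trace, Matrix.diag, Matrix.diagonal_mul]

lemma upperTri_std {n : ℕ} (i j : Fin n) (hij : i ≤ j) :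
    UpperTri (Matrix.single i j (1:ℂ)) := by
  intro a b hba
  simp only [Matrix.single, Matrix.of_apply, ite_eq_right_iff]
  rintro ⟨rfl, rfl⟩
  exact absurd hij (not_le.mpr hba)

lemma key_trace {n : ℕ} (x y m : Mat n) (α : Mat n) :
    Matrix.trace (α * m) + Matrix.trace ((α * x - x * α) * y)
      = Matrix.trace (α * (m + x * y - y * x)) := by
  have h1 : Matrix.trace (x * (α * y)) = Matrix.trace (α * (y * x)) := by
    rw [Matrix.trace_mul_comm, Matrix.mul_assoc]
  simp only [sub_mul, mul_add, mul_sub, Matrix.trace_add, Matrix.trace_sub,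
    Matrix.mul_assoc, h1]
  ring

/-- **`gl_n` case of the linear-algebra computation in Proposition 5.1** (identifying the
fiber of the conormal bundle to `ε(g̃)` inside `T*(ℬ × 𝔤 × 𝔱)`): given `x` upper
triangular, `m` strictly upper triangular and `h` diagonal, the trace identity
`tr(α m) + tr((αx − xα + β) y) + tr(diag(β) h) = 0` holds for all `α` and all upper
triangular `β` iff `y` is upper triangular, `m = yx − xy` and `h = −diag(y)`. -/
theorem stmt7 (n : ℕ) (hn : 1 ≤ n) (x m y h : Mat n)
    (hx : UpperTri x) (hm : StrictUpperTri m) (hh : Matrix.IsDiag h) :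
    (∀ α β : Mat n, UpperTri β →
        Matrix.trace (α * m) + Matrix.trace ((α * x - x * α + β) * y) +
          Matrix.trace (diagPart β * h) = 0) ↔
      (UpperTri y ∧ m = y * x - x * y ∧ h = -diagPart y) := by
  constructor
  · intro H
    -- step 1 : for all α, trace (α * (m + x*y - y*x)) = 0
    have hd0 : diagPart (0 : Mat n) = 0 := by
      simp [diagPart]
    have K : ∀ α : Mat n, Matrix.trace (α * (m + x * y - y * x)) = 0 := by
      intro α
      have := H α 0 (fun i j _ => rfl)
      rw [hd0, Matrix.zero_mul, Matrix.trace_zero, add_zero, add_zero] at this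
      rw [← key_trace]
      simpa using this
    have hM : m + x * y - y * x = 0 := by
      ext i j
      have := K (Matrix.single j i 1)
      rw [trace_std] at this
      simpa using this
    have hmeq : m = y * x - x * y := by
      rw [sub_eq_zero] at hM
      exact eq_sub_iff_add_eq.mpr hM
    -- step 2 : for all upper triangular β, trace (β*y) + trace (diagPart β * h) = 0
    have K2 : ∀ β : Mat n, UpperTri β →
        Matrix.trace (β * y) + Matrix.trace (diagPart β * h) = 0 := by
      intro β hβ
      have := H 0 β hβ
      simpa using this
    have hytri : UpperTri y := by
      intro a b hba
      have := K2 (Matrix.single b a 1) (upperTri_std b a hba.le)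
      rw [trace_std] at this
      have hdz : diagPart (Matrix.single b a (1:ℂ)) = 0 := by
        ext i j
        simp only [diagPart, Matrix.diagonal_apply, Matrix.single, Matrix.of_apply,
          Matrix.zero_apply]
        split
        · rename_i hij
          subst hij
          simp only [ite_eq_right_iff]
          rintro ⟨rfl, rfl⟩
          exact absurd rfl hba.ne
        · rfl
      rw [hdz, Matrix.zero_mul, Matrix.trace_zero, add_zero] at this
      exact this
    have hheq : h = -diagPart y := by
      have hdiag : ∀ i : Fin n, h i i = -(y i i) := by
        intro i
        have := K2 (Matrix.single i i 1) (upperTri_std i i le_rfl)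
        rw [trace_std] at this
        have hdp : diagPart (Matrix.single i i (1:ℂ)) =
            Matrix.diagonal (fun j => if i = j then (1:ℂ) else 0) := by
          ext a b
          simp [diagPart, Matrix.diagonal_apply, Matrix.single]
        rw [hdp, trace_diag_mul] at this
        simp only [ite_mul, one_mul, zero_mul, Finset.sum_ite_eq, Finset.mem_univ,
          if_true] at this
        linear_combination this
      ext i j
      by_cases hij : i = j
      · subst hij
        simp [diagPart, Matrix.diagonal_apply_eq, hdiag i]
      · simp [diagPart, Matrix.diagonal_apply_ne _ hij, hh hij]
    exact ⟨hytri, hmeq, hheq⟩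
  · rintro ⟨hy, rfl, rfl⟩ α β hβ
    have hM : (y * x - x * y) + x * y - y * x = 0 := by abel
    have h1 : Matrix.trace (α * (y * x - x * y)) + Matrix.trace ((α * x - x * α) * y) = 0 := by
      rw [key_trace, hM, Matrix.mul_zero, Matrix.trace_zero]
    have h2 : Matrix.trace (β * y) = ∑ i, β i i * y i i := by
      rw [Matrix.trace]
      apply Finset.sum_congr rfl
      intro i _
      rw [Matrix.diag_apply, Matrix.mul_apply]
      apply Finset.sum_eq_single i
      · intro k _ hk
        rcases hk.lt_or_gt with hlt | hgt
        · rw [hβ i k hlt, zero_mul]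
        · rw [hy k i hgt, mul_zero]
      · intro hi; exact absurd (Finset.mem_univ i) hi
    have h3 : Matrix.trace (diagPart β * -diagPart y) = -∑ i, β i i * y i i := by
      rw [Matrix.mul_neg, Matrix.trace_neg, neg_inj]
      rw [diagPart, trace_diag_mul]
      apply Finset.sum_congr rfl
      intro i _
      simp [diagPart]
    rw [add_mul, Matrix.trace_add, h2, h3]
    linear_combination h1
end
end

section
/- Let n ≥ 1 and let x, y ∈ Mₙ(ℂ) be upper triangular matrices with diagonal parts dₓ and d_y (the diagonal matrices with the same diagonal entries as x and y respectively). Then every polynomial function f on Mₙ(ℂ) × Mₙ(ℂ) invariant under simultaneous conjugation satisfies f(x,y) = f(dₓ, d_y). (This is the gl_n case of the first step of the proof of Lemma 6.1: for x = h₁ + n₁, y = h₂ + n₂ with hᵢ ∈ 𝔱 and nᵢ ∈ [𝔟,𝔟], one has f(x,y) = f(h₁,h₂) for all f ∈ ℂ[𝔤×𝔤]^G.) -/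
open Matrix

noncomputable section

/-- **First step of the proof of Lemma 6.1, `gl_n` case**: for upper triangular matrices
`x`, `y` with diagonal parts `dₓ`, `d_y`, every polynomial function invariant under
simultaneous conjugation satisfies `f(x,y) = f(dₓ,d_y)`. -/
theorem stmt10 (n : ℕ) (hn : 1 ≤ n) (x y : Mat n) (hx : UpperTri x) (hy : UpperTri y)
    (f : MvPolynomial ((Fin n × Fin n) ⊕ (Fin n × Fin n)) ℂ)
    (hf : ∀ g a b : Mat n, IsUnit g →
      evalPair f (g * a * g⁻¹) (g * b * g⁻¹) = evalPair f a b) :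
    evalPair f x y = evalPair f (diagPart x) (diagPart y) := by
  classical
  set xt : ℂ → Mat n := fun t => Matrix.of fun i j => t ^ ((j : ℕ) - (i : ℕ)) * x i j with hxt
  set yt : ℂ → Mat n := fun t => Matrix.of fun i j => t ^ ((j : ℕ) - (i : ℕ)) * y i j with hyt
  set σ : (Fin n × Fin n) ⊕ (Fin n × Fin n) → Polynomial ℂ :=
    Sum.elim (fun p => Polynomial.C (x p.1 p.2) * Polynomial.X ^ ((p.2 : ℕ) - (p.1 : ℕ)))
             (fun p => Polynomial.C (y p.1 p.2) * Polynomial.X ^ ((p.2 : ℕ) - (p.1 : ℕ))) with hσ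
  set P : Polynomial ℂ := MvPolynomial.aeval σ f with hP
  have hPeval : ∀ t : ℂ, P.eval t = evalPair f (xt t) (yt t) := by
    intro t
    have h1 : P.eval t = Polynomial.evalRingHom t (MvPolynomial.eval₂ (algebraMap ℂ (Polynomial ℂ)) σ f) := by
      rw [hP, MvPolynomial.aeval_def]; rfl
    rw [h1, MvPolynomial.eval₂_comp_left]
    show _ = MvPolynomial.eval₂ (RingHom.id ℂ) _ f
    congr 1
    · ext c; simp
    · funext v
      rcases v with p | p
      · show Polynomial.eval t (Polynomial.C (x p.1 p.2) * Polynomial.X ^ ((p.2 : ℕ) - (p.1 : ℕ)))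
            = t ^ ((p.2 : ℕ) - (p.1 : ℕ)) * x p.1 p.2
        rw [Polynomial.eval_mul, Polynomial.eval_C, Polynomial.eval_pow, Polynomial.eval_X, mul_comm]
      · show Polynomial.eval t (Polynomial.C (y p.1 p.2) * Polynomial.X ^ ((p.2 : ℕ) - (p.1 : ℕ)))
            = t ^ ((p.2 : ℕ) - (p.1 : ℕ)) * y p.1 p.2
        rw [Polynomial.eval_mul, Polynomial.eval_C, Polynomial.eval_pow, Polynomial.eval_X, mul_comm]
  -- for t ≠ 0, the scaled pair is conjugate to (x, y)
  have key : ∀ t : ℂ, t ≠ 0 → P.eval t = evalPair f x y := by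
    intro t ht
    set g : Mat n := Matrix.diagonal (fun i : Fin n => t⁻¹ ^ (i : ℕ)) with hg
    have hgu : IsUnit g := by
      rw [hg, Matrix.isUnit_diagonal]
      refine IsUnit.of_mul_eq_one (fun i : Fin n => t ^ (i : ℕ)) ?_
      funext i
      show t⁻¹ ^ (i : ℕ) * t ^ (i : ℕ) = 1
      rw [← mul_pow, inv_mul_cancel₀ ht, one_pow]
    have hginv : g⁻¹ = Matrix.diagonal (fun i : Fin n => t ^ (i : ℕ)) := by
      apply Matrix.inv_eq_right_inv
      rw [hg, Matrix.diagonal_mul_diagonal]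
      convert Matrix.diagonal_one with i
      rw [← mul_pow, inv_mul_cancel₀ ht, one_pow]
    have hconj : ∀ z : Mat n, UpperTri z →
        g * z * g⁻¹ = Matrix.of fun i j : Fin n => t ^ ((j : ℕ) - (i : ℕ)) * z i j := by
      intro z hz
      ext i j
      rw [hginv, hg]
      simp only [Matrix.mul_diagonal, Matrix.diagonal_mul, Matrix.of_apply]
      rcases le_or_gt (i : ℕ) (j : ℕ) with h | h
      · rw [← pow_sub_mul_pow t h]
        field_simp
        have e : (1 / t) ^ (i : ℕ) * t ^ (i : ℕ) = 1 := by rw [← mul_pow, one_div, inv_mul_cancel₀ ht, one_pow]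
        linear_combination (z i j) * e
      · rw [hz i j (by exact_mod_cast h)]
        ring
    rw [hPeval t, ← hf g x y hgu, hconj x hx, hconj y hy]
  -- P is constant
  have hPconst : P = Polynomial.C (evalPair f x y) := by
    have hz : P - Polynomial.C (evalPair f x y) = 0 := by
      apply Polynomial.eq_zero_of_infinite_isRoot
      apply Set.Infinite.mono (s := {t : ℂ | t ≠ 0})
      · intro t ht
        simp only [Set.mem_setOf_eq, Polynomial.IsRoot, Polynomial.eval_sub,
          Polynomial.eval_C, key t ht, sub_self]
      · have h1 : {t : ℂ | t ≠ 0} = ({0} : Set ℂ)ᶜ := by ext t; simp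
        rw [h1]
        exact (Set.finite_singleton 0).infinite_compl
    linear_combination (norm := ring_nf) hz
  -- evaluate at 0
  have h0 : xt 0 = diagPart x := by
    ext i j
    show (0 : ℂ) ^ ((j : ℕ) - (i : ℕ)) * x i j = diagPart x i j
    unfold diagPart
    rcases lt_trichotomy i j with h | h | h
    · rw [Matrix.diagonal_apply_ne _ (ne_of_lt h), zero_pow (by omega : (j:ℕ) - (i:ℕ) ≠ 0), zero_mul]
    · subst h; simp [Matrix.diagonal_apply_eq]
    · rw [Matrix.diagonal_apply_ne _ (ne_of_gt h), hx i j h, mul_zero]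
  have h0' : yt 0 = diagPart y := by
    ext i j
    show (0 : ℂ) ^ ((j : ℕ) - (i : ℕ)) * y i j = diagPart y i j
    unfold diagPart
    rcases lt_trichotomy i j with h | h | h
    · rw [Matrix.diagonal_apply_ne _ (ne_of_lt h), zero_pow (by omega : (j:ℕ) - (i:ℕ) ≠ 0), zero_mul]
    · subst h; simp [Matrix.diagonal_apply_eq]
    · rw [Matrix.diagonal_apply_ne _ (ne_of_gt h), hy i j h, mul_zero]
  have := hPeval 0
  rw [hPconst, Polynomial.eval_C, h0, h0'] at this
  exact this
end
end
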